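/- Finite Kantorovich duality: for finite sets I, J, probability vectors μ on I and ν on J, and cost matrix c, one has MK(ν) = sup over (u,v) ∈ ℝ^I × ℝ^J with u_i + v_j ≤ c_{ij} for all i,j of (Σ_i u_i μ_i + Σ_j v_j ν_j), and moreover the supremum is attained with u_i = min_{j} (c_{ij} − v_j) for some v ∈ ℝ^J. -/

import Mathlib

open Finset
open Pointwise


section
variable {I J : Type*} [Fintype I] [Fintype J] [DecidableEq I] [DecidableEq J]
  [Nonempty I] [Nonempty J]

abbrev KDspace (I J : Type*) : Type _ := (I → ℝ) × (J → ℝ) × ℝ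

noncomputable def Lmap (c : I → J → ℝ) : ((I × J) → ℝ) →ₗ[ℝ] ((I → ℝ) × (J → ℝ) × ℝ) where
  toFun γ := (fun i => ∑ j, γ (i, j), fun j => ∑ i, γ (i, j), ∑ i, ∑ j, c i j * γ (i, j))
  map_add' γ δ := by
    refine Prod.ext (funext fun i => ?_) (Prod.ext (funext fun j => ?_) ?_) <;>
      simp [Finset.sum_add_distrib, mul_add]
  map_smul' r γ := by
    refine Prod.ext (funext fun i => ?_) (Prod.ext (funext fun j => ?_) ?_) <;>
      simp [Finset.mul_sum, mul_left_comm]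

lemma sep_lemma
    (μ : I → ℝ) (hμ0 : ∀ i, 0 ≤ μ i) (hμ1 : ∑ i, μ i = 1)
    (ν : J → ℝ) (hν0 : ∀ j, 0 ≤ ν j) (hν1 : ∑ j, ν j = 1)
    (c : I → J → ℝ) (MK : ℝ)
    (hMK : MK = sInf ((fun γ : I → J → ℝ => ∑ i, ∑ j, c i j * γ i j) ''
      {γ | (∀ i j, 0 ≤ γ i j) ∧ (∀ i, ∑ j, γ i j = μ i) ∧ (∀ j, ∑ i, γ i j = ν j)}))
    (ε : ℝ) (hε : 0 < ε) :
    ∃ (u : I → ℝ) (v : J → ℝ), (∀ i j, u i + v j ≤ c i j) ∧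
      MK - ε < ∑ i, u i * μ i + ∑ j, v j * ν j := by
  set T : Set (KDspace I J) := (Lmap c) '' stdSimplex ℝ (I × J) with hT
  set R : Set (KDspace I J) := {x : KDspace I J | x.1 = 0 ∧ x.2.1 = 0 ∧ 0 ≤ x.2.2} with hR
  have hTc : IsCompact T :=
    (isCompact_stdSimplex ℝ _).image (Lmap c).continuous_of_finiteDimensional
  have hTconv : Convex ℝ T := (convex_stdSimplex ℝ _).linear_image _
  have hRclosed : IsClosed R := by
    have : R = {x : KDspace I J | x.1 = 0} ∩ ({x : KDspace I J | x.2.1 = 0} ∩ {x : KDspace I J | 0 ≤ x.2.2}) := by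
      ext x; simp [hR, and_assoc]
    rw [this]
    exact (isClosed_eq continuous_fst continuous_const).inter
      ((isClosed_eq (continuous_snd.fst) continuous_const).inter
        (isClosed_le continuous_const (continuous_snd.snd)))
  have hRconv : Convex ℝ R := by
    intro x hx y hy a b ha hb hab
    refine ⟨?_, ?_, ?_⟩
    · show a • x.1 + b • y.1 = 0
      rw [hx.1, hy.1]; simp
    · show a • x.2.1 + b • y.2.1 = 0
      rw [hx.2.1, hy.2.1]; simp
    · show 0 ≤ a • x.2.2 + b • y.2.2
      exact add_nonneg (mul_nonneg ha hx.2.2) (mul_nonneg hb hy.2.2)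
  set D : Set (KDspace I J) := R +ᵥ T with hD
  have hDclosed : IsClosed D := hRclosed.vadd_right_of_isCompact hTc
  have hDeq : D = R + T := by
    ext x; simp [hD, Set.mem_vadd_set, Set.mem_add, vadd_eq_add]
  have hDconv : Convex ℝ D := hDeq ▸ hRconv.add hTconv
  -- the product plan belongs to the simplex
  set γprod : I × J → ℝ := fun p => μ p.1 * ν p.2 with hγp
  have hγprodS : γprod ∈ stdSimplex ℝ (I × J) := by
    constructor
    · intro p; exact mul_nonneg (hμ0 p.1) (hν0 p.2)
    · simp [hγp, Fintype.sum_prod_type, ← Finset.mul_sum, hν1, hμ1]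
  have hLγprod : Lmap c γprod = (μ, ν, ∑ i, ∑ j, c i j * (μ i * ν j)) := by
    refine Prod.ext (funext fun i => ?_) (Prod.ext (funext fun j => ?_) ?_)
    · show ∑ j, μ i * ν j = μ i
      rw [← Finset.mul_sum, hν1, mul_one]
    · show ∑ i, μ i * ν j = ν j
      rw [← Finset.sum_mul, hμ1, one_mul]
    · rfl
  -- lower bound on the primal value
  have hMKle : ∀ γ : I → J → ℝ, (∀ i j, 0 ≤ γ i j) → (∀ i, ∑ j, γ i j = μ i) →
      (∀ j, ∑ i, γ i j = ν j) → MK ≤ ∑ i, ∑ j, c i j * γ i j := by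
    obtain ⟨M, hM⟩ : ∃ M : ℝ, ∀ i j, |c i j| ≤ M :=
      ⟨(univ : Finset (I × J)).sup' univ_nonempty (fun p => |c p.1 p.2|),
        fun i j => Finset.le_sup' (fun p : I × J => |c p.1 p.2|) (mem_univ (i, j))⟩
    have hbdd : ∀ γ : I → J → ℝ, (∀ i j, 0 ≤ γ i j) → (∀ i, ∑ j, γ i j = μ i) →
        (∀ j, ∑ i, γ i j = ν j) → -M ≤ ∑ i, ∑ j, c i j * γ i j := by
      intro γ h0 h1 h2
      have hγsum : ∑ i, ∑ j, γ i j = 1 := by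
        rw [Finset.sum_congr rfl (fun i _ => h1 i), hμ1]
      have : ∑ i, ∑ j, (-M) * γ i j ≤ ∑ i, ∑ j, c i j * γ i j := by
        refine Finset.sum_le_sum fun i _ => Finset.sum_le_sum fun j _ => ?_
        exact mul_le_mul_of_nonneg_right (neg_le_of_abs_le (hM i j)) (h0 i j)
      calc -M = ∑ i, ∑ j, (-M) * γ i j := by
              simp only [← Finset.mul_sum]
              rw [hγsum, mul_one]
        _ ≤ _ := this
    intro γ h0 h1 h2
    rw [hMK]
    exact csInf_le ⟨-M, by rintro x ⟨γ', ⟨g0, g1, g2⟩, rfl⟩; exact hbdd γ' g0 g1 g2⟩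
      ⟨γ, ⟨h0, h1, h2⟩, rfl⟩
  -- the point to separate
  set p : KDspace I J := (μ, ν, MK - ε) with hp
  have hpD : p ∉ D := by
    intro hmem
    rw [hDeq] at hmem
    obtain ⟨r, hr, t, ht, hrt⟩ := Set.mem_add.mp hmem
    obtain ⟨γ, hγS, rfl⟩ := ht
    have h1 : ∀ i, ∑ j, γ (i, j) = μ i := by
      intro i
      have := congrFun (congrArg Prod.fst hrt) i
      simpa [Prod.fst_add, hr.1, Lmap] using this
    have h2 : ∀ j, ∑ i, γ (i, j) = ν j := by
      intro j
      have := congrFun (congrArg (fun x : KDspace I J => x.2.1) hrt) j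
      simpa [Prod.fst_add, Prod.snd_add, hr.2.1, Lmap] using this
    have h3 : r.2.2 + ∑ i, ∑ j, c i j * γ (i, j) = MK - ε := by
      have := congrArg (fun x : KDspace I J => x.2.2) hrt
      simpa [Prod.fst_add, Prod.snd_add, Lmap] using this
    have hle := hMKle (fun i j => γ (i, j)) (fun i j => hγS.1 (i, j)) h1 h2
    have := hr.2.2
    linarith
  obtain ⟨f, s, hfp, hfD⟩ := geometric_hahn_banach_point_closed hDconv hDclosed hpD
  set u' : I → ℝ := fun i => f (Pi.single i 1, 0, 0) with hu'
  set v' : J → ℝ := fun j => f (0, Pi.single j 1, 0) with hv'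
  set lam : ℝ := f (0, 0, 1) with hlamdef
  have hf : ∀ (a : I → ℝ) (b : J → ℝ) (t : ℝ),
      f (a, b, t) = ∑ i, a i * u' i + ∑ j, b j * v' j + t * lam := by
    intro a b t
    have hdecomp : ((a, b, t) : KDspace I J) = (∑ i, a i • ((Pi.single i 1, 0, 0) : KDspace I J))
        + (∑ j, b j • ((0, Pi.single j 1, 0) : KDspace I J)) + t • ((0, 0, 1) : KDspace I J) := by
      refine Prod.ext (funext fun i => ?_) (Prod.ext (funext fun j => ?_) ?_) <;>
        simp [Prod.fst_sum, Prod.snd_sum, Finset.sum_apply, Pi.single_apply, mul_ite]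
    rw [hdecomp]
    simp only [map_add, map_sum, map_smul, smul_eq_mul]
    rfl
  have hTD : ∀ t ∈ T, s < f t := by
    intro t ht
    refine hfD t ?_
    rw [hDeq]
    exact Set.mem_add.mpr ⟨0, ⟨rfl, rfl, le_refl 0⟩, t, ht, zero_add t⟩
  -- point masses
  have hdelta : ∀ i j, s < u' i + v' j + c i j * lam := by
    intro i j
    set γδ : I × J → ℝ := fun q => if q = (i, j) then 1 else 0 with hγδ
    have hγδS : γδ ∈ stdSimplex ℝ (I × J) := by
      constructor
      · intro q; by_cases h : q = (i, j) <;> simp [hγδ, h]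
      · simp [hγδ]
    have e1 : ∀ i', ∑ j', γδ (i', j') = (Pi.single i 1 : I → ℝ) i' := by
      intro i'
      simp only [hγδ, Prod.mk.injEq, ite_and, Pi.single_apply]
      by_cases h : i' = i <;> simp [h]
    have e2 : ∀ j', ∑ i', γδ (i', j') = (Pi.single j 1 : J → ℝ) j' := by
      intro j'
      simp only [hγδ, Prod.mk.injEq, ite_and, Pi.single_apply]
      by_cases h : j' = j <;> simp [h]
    have e3 : ∑ i', ∑ j', c i' j' * γδ (i', j') = c i j := by
      simp only [hγδ, Prod.mk.injEq, ite_and, mul_ite, mul_one, mul_zero]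
      rw [Finset.sum_comm]
      simp
    have hL : Lmap c γδ = ((Pi.single i 1 : I → ℝ), (Pi.single j 1 : J → ℝ), c i j) := by
      refine Prod.ext (funext fun i' => ?_) (Prod.ext (funext fun j' => ?_) ?_)
      · simpa [Lmap] using e1 i'
      · simpa [Lmap] using e2 j'
      · simpa [Lmap] using e3
    have := hTD _ ⟨γδ, hγδS, rfl⟩
    rw [hL, hf] at this
    simpa [Pi.single_apply, mul_ite] using this
  -- f at the product plan
  have hfprod : s < ∑ i, μ i * u' i + ∑ j, ν j * v' j
      + (∑ i, ∑ j, c i j * (μ i * ν j)) * lam := by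
    have := hTD _ ⟨γprod, hγprodS, rfl⟩
    rwa [hLγprod, hf] at this
  have hfp' : ∑ i, μ i * u' i + ∑ j, ν j * v' j + (MK - ε) * lam < s := by
    have := hfp
    rwa [hp, hf] at this
  -- lam ≥ 0
  have hlam0 : 0 ≤ lam := by
    by_contra hneg
    push_neg at hneg
    set t₀ : KDspace I J := Lmap c γprod with ht₀
    have hft₀ : s < f t₀ := hTD _ ⟨γprod, hγprodS, rfl⟩
    set τ : ℝ := (f t₀ - s + 1) / (-lam) with hτ
    have hτ0 : 0 ≤ τ := by
      apply div_nonneg <;> linarith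
    have hmem : ((0, 0, τ) : KDspace I J) + t₀ ∈ D := by
      rw [hDeq]
      exact Set.mem_add.mpr ⟨(0, 0, τ), ⟨rfl, rfl, hτ0⟩, t₀, ⟨γprod, hγprodS, rfl⟩, rfl⟩
    have hlt := hfD _ hmem
    rw [map_add] at hlt
    have hfr : f ((0, 0, τ) : KDspace I J) = τ * lam := by
      rw [hf]; simp
    have h1 : τ * -lam = f t₀ - s + 1 := div_mul_cancel₀ _ (by linarith)
    have hτlam : τ * lam = -(f t₀ - s + 1) := by linear_combination -h1
    rw [hfr, hτlam] at hlt
    linarith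
  -- lam ≠ 0
  have hlampos : 0 < lam := by
    rcases lt_or_eq_of_le hlam0 with h | h
    · exact h
    · exfalso
      rw [← h] at hfprod hfp'
      simp at hfprod hfp'
      linarith
  -- construct the dual solution
  refine ⟨fun i => -u' i / lam, fun j => (s - v' j) / lam, ?_, ?_⟩
  · intro i j
    rw [← add_div, div_le_iff₀ hlampos]
    have := hdelta i j
    linarith
  · have hA : ∑ i, (-u' i / lam) * μ i = (-(∑ i, μ i * u' i)) / lam := by
      rw [← Finset.sum_neg_distrib, Finset.sum_div]
      exact Finset.sum_congr rfl fun i _ => by ring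
    have hB : ∑ j, ((s - v' j) / lam) * ν j = (s - ∑ j, ν j * v' j) / lam := by
      have : ∑ j, ((s - v' j) / lam) * ν j = (∑ j, (s * ν j - ν j * v' j)) / lam := by
        rw [Finset.sum_div]
        exact Finset.sum_congr rfl fun j _ => by ring
      rw [this, Finset.sum_sub_distrib, ← Finset.mul_sum, hν1, mul_one]
    rw [hA, hB, ← add_div, lt_div_iff₀ hlampos]
    linarith
end
private lemma inf'_add_const {α : Type*} (s : Finset α) (h : s.Nonempty) (f : α → ℝ) (a : ℝ) :
    s.inf' h f + a = s.inf' h (fun x => f x + a) := by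
  apply le_antisymm
  · apply Finset.le_inf'
    intro b hb
    exact add_le_add_left (Finset.inf'_le f hb) a
  · obtain ⟨b, hb, hfb⟩ := s.exists_mem_eq_inf' h f
    rw [hfb]
    exact Finset.inf'_le _ hb

theorem kantorovich_duality_finite
    {I J : Type*} [Fintype I] [Fintype J] [Nonempty I] [Nonempty J]
    (μ : I → ℝ) (hμ0 : ∀ i, 0 ≤ μ i) (hμ1 : ∑ i, μ i = 1)
    (ν : J → ℝ) (hν0 : ∀ j, 0 ≤ ν j) (hν1 : ∑ j, ν j = 1)
    (c : I → J → ℝ)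
    (MK : ℝ)
    (hMK : MK = sInf ((fun γ : I → J → ℝ => ∑ i, ∑ j, c i j * γ i j) ''
      {γ | (∀ i j, 0 ≤ γ i j) ∧ (∀ i, ∑ j, γ i j = μ i) ∧ (∀ j, ∑ i, γ i j = ν j)})) :
    MK = sSup {x : ℝ | ∃ u : I → ℝ, ∃ v : J → ℝ,
        (∀ i j, u i + v j ≤ c i j) ∧ x = ∑ i, u i * μ i + ∑ j, v j * ν j} ∧
    ∃ v : J → ℝ,
      (∀ i j, (Finset.univ.inf' Finset.univ_nonempty (fun j' => c i j' - v j')) + v j ≤ c i j) ∧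
      (∑ i, (Finset.univ.inf' Finset.univ_nonempty (fun j' => c i j' - v j')) * μ i
        + ∑ j, v j * ν j) = MK := by
  classical
  -- the product coupling witnesses nonemptiness of the primal feasible set
  have hγ0mem : (fun i j => μ i * ν j) ∈
      {γ : I → J → ℝ | (∀ i j, 0 ≤ γ i j) ∧ (∀ i, ∑ j, γ i j = μ i) ∧ (∀ j, ∑ i, γ i j = ν j)} := by
    refine ⟨fun i j => mul_nonneg (hμ0 i) (hν0 j), fun i => ?_, fun j => ?_⟩
    · rw [← Finset.mul_sum, hν1, mul_one]
    · rw [← Finset.sum_mul, hμ1, one_mul]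
  have hPne : ((fun γ : I → J → ℝ => ∑ i, ∑ j, c i j * γ i j) ''
      {γ | (∀ i j, 0 ≤ γ i j) ∧ (∀ i, ∑ j, γ i j = μ i) ∧ (∀ j, ∑ i, γ i j = ν j)}).Nonempty :=
    ⟨_, ⟨_, hγ0mem, rfl⟩⟩
  -- weak duality
  have weak : ∀ (u : I → ℝ) (v : J → ℝ), (∀ i j, u i + v j ≤ c i j) →
      ∑ i, u i * μ i + ∑ j, v j * ν j ≤ MK := by
    intro u v huv
    rw [hMK]
    apply le_csInf hPne
    rintro x ⟨γ, ⟨h0, h1, h2⟩, rfl⟩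
    have e1 : ∑ i, u i * μ i = ∑ i, ∑ j, u i * γ i j := by
      refine Finset.sum_congr rfl fun i _ => ?_
      rw [← h1 i, Finset.mul_sum]
    have e2 : ∑ j, v j * ν j = ∑ i, ∑ j, v j * γ i j := by
      rw [Finset.sum_comm]
      refine Finset.sum_congr rfl fun j _ => ?_
      rw [← h2 j, Finset.mul_sum]
    rw [e1, e2, ← Finset.sum_add_distrib]
    refine Finset.sum_le_sum fun i _ => ?_
    rw [← Finset.sum_add_distrib]
    refine Finset.sum_le_sum fun j _ => ?_
    rw [← add_mul]
    exact mul_le_mul_of_nonneg_right (huv i j) (h0 i j)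
  -- a uniform bound on the cost
  obtain ⟨M, hM0, hM⟩ : ∃ M : ℝ, 0 ≤ M ∧ ∀ i j, |c i j| ≤ M := by
    refine ⟨(univ : Finset (I × J)).sup' univ_nonempty (fun p => |c p.1 p.2|), ?_, ?_⟩
    · exact le_trans (abs_nonneg _)
        (Finset.le_sup' (fun p : I × J => |c p.1 p.2|)
          (mem_univ (Classical.arbitrary I, Classical.arbitrary J)))
    · exact fun i j => Finset.le_sup' (fun p : I × J => |c p.1 p.2|) (mem_univ (i, j))
  -- normalization of dual solutions
  have norm : ∀ (u : I → ℝ) (v : J → ℝ), (∀ i j, u i + v j ≤ c i j) →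
      ∃ (u₂ : I → ℝ) (v₂ : J → ℝ), (∀ i j, u₂ i + v₂ j ≤ c i j) ∧
        (∀ i, |u₂ i| ≤ 3 * M) ∧ (∀ j, |v₂ j| ≤ 2 * M) ∧
        ∑ i, u i * μ i + ∑ j, v j * ν j ≤ ∑ i, u₂ i * μ i + ∑ j, v₂ j * ν j := by
    intro u v huv
    set u1 : I → ℝ := fun i => univ.inf' univ_nonempty (fun j => c i j - v j) with hu1
    have hu1f : ∀ i j, u1 i + v j ≤ c i j := by
      intro i j
      have := Finset.inf'_le (fun j' => c i j' - v j') (mem_univ j)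
      simp only [hu1]; linarith
    have huu1 : ∀ i, u i ≤ u1 i := fun i =>
      Finset.le_inf' _ _ fun j _ => by linarith [huv i j]
    set v1 : J → ℝ := fun j => univ.inf' univ_nonempty (fun i => c i j - u1 i) with hv1
    have hv1f : ∀ i j, u1 i + v1 j ≤ c i j := by
      intro i j
      have := Finset.inf'_le (fun i' => c i' j - u1 i') (mem_univ i)
      simp only [hv1]; linarith
    have hvv1 : ∀ j, v j ≤ v1 j := fun j =>
      Finset.le_inf' _ _ fun i _ => by linarith [hu1f i j]
    have hv1spread : ∀ j j', v1 j - v1 j' ≤ 2 * M := by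
      intro j j'
      obtain ⟨i₁, _, hi₁⟩ := Finset.exists_mem_eq_inf' (univ_nonempty) (fun i => c i j' - u1 i)
      have h1 : v1 j ≤ c i₁ j - u1 i₁ := Finset.inf'_le _ (mem_univ i₁)
      have h2 : v1 j' = c i₁ j' - u1 i₁ := hi₁
      have := abs_le.mp (hM i₁ j)
      have := abs_le.mp (hM i₁ j')
      linarith
    set j₀ : J := Classical.arbitrary J with hj₀
    set v₂ : J → ℝ := fun j => v1 j - v1 j₀ with hv₂
    set u2raw : I → ℝ := fun i => univ.inf' univ_nonempty (fun j => c i j - v1 j) with hu2raw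
    have hu1u2 : ∀ i, u1 i ≤ u2raw i := fun i =>
      Finset.le_inf' _ _ fun j _ => by linarith [hv1f i j]
    set u₂ : I → ℝ := fun i => u2raw i + v1 j₀ with hu₂
    have hu₂eq : ∀ i, u₂ i = univ.inf' univ_nonempty (fun j => c i j - v₂ j) := by
      intro i
      rw [hu₂]
      simp only
      rw [inf'_add_const]
      refine Finset.inf'_congr univ_nonempty rfl fun j _ => ?_
      simp only [hv₂]
      ring
    have hfeas : ∀ i j, u₂ i + v₂ j ≤ c i j := by
      intro i j
      have h1 : u2raw i ≤ c i j - v1 j := Finset.inf'_le _ (mem_univ j)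
      simp only [hu₂, hv₂]
      linarith
    refine ⟨u₂, v₂, hfeas, ?_, ?_, ?_⟩
    · intro i
      rw [abs_le]
      constructor
      · rw [hu₂eq i]
        apply Finset.le_inf'
        intro j _
        have h1 := (abs_le.mp (hM i j)).1
        have h2 : v₂ j ≤ 2 * M := by simp only [hv₂]; linarith [hv1spread j j₀]
        linarith
      · have h1 := hfeas i j₀
        have h2 : v₂ j₀ = 0 := by simp [hv₂]
        have h3 := (abs_le.mp (hM i j₀)).2
        linarith
    · intro j
      rw [abs_le]
      constructor
      · have := hv1spread j₀ j; simp only [hv₂]; linarith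
      · have := hv1spread j j₀; simp only [hv₂]; linarith
    · have eu : ∑ i, u₂ i * μ i = (∑ i, u2raw i * μ i) + v1 j₀ := by
        have : ∀ i, u₂ i * μ i = u2raw i * μ i + v1 j₀ * μ i := by
          intro i; simp only [hu₂]; ring
        rw [Finset.sum_congr rfl fun i _ => this i, Finset.sum_add_distrib,
          ← Finset.mul_sum, hμ1, mul_one]
      have ev : ∑ j, v₂ j * ν j = (∑ j, v1 j * ν j) - v1 j₀ := by
        have : ∀ j, v₂ j * ν j = v1 j * ν j - v1 j₀ * ν j := by
          intro j; simp only [hv₂]; ring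
        rw [Finset.sum_congr rfl fun j _ => this j, Finset.sum_sub_distrib,
          ← Finset.mul_sum, hν1, mul_one]
      rw [eu, ev]
      have h1 : ∑ i, u i * μ i ≤ ∑ i, u2raw i * μ i :=
        Finset.sum_le_sum fun i _ =>
          mul_le_mul_of_nonneg_right (le_trans (huu1 i) (hu1u2 i)) (hμ0 i)
      have h2 : ∑ j, v j * ν j ≤ ∑ j, v1 j * ν j :=
        Finset.sum_le_sum fun j _ => mul_le_mul_of_nonneg_right (hvv1 j) (hν0 j)
      linarith
  -- the compact set of normalized dual solutions
  set S : Set ((I → ℝ) × (J → ℝ)) := {p | (∀ i j, p.1 i + p.2 j ≤ c i j) ∧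
    (∀ i, |p.1 i| ≤ 3 * M) ∧ (∀ j, |p.2 j| ≤ 2 * M)} with hS
  have hSclosed : IsClosed S := by
    have : S = (⋂ i, ⋂ j, {p : (I → ℝ) × (J → ℝ) | p.1 i + p.2 j ≤ c i j}) ∩
        ((⋂ i, {p : (I → ℝ) × (J → ℝ) | |p.1 i| ≤ 3 * M}) ∩
         (⋂ j, {p : (I → ℝ) × (J → ℝ) | |p.2 j| ≤ 2 * M})) := by
      ext p
      simp only [hS, Set.mem_setOf_eq, Set.mem_inter_iff, Set.mem_iInter]
    rw [this]
    refine IsClosed.inter ?_ (IsClosed.inter ?_ ?_)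
    · exact isClosed_iInter fun i => isClosed_iInter fun j =>
        isClosed_le (((continuous_apply i).comp continuous_fst).add
          ((continuous_apply j).comp continuous_snd)) continuous_const
    · exact isClosed_iInter fun i =>
        isClosed_le ((continuous_apply i).comp continuous_fst).abs continuous_const
    · exact isClosed_iInter fun j =>
        isClosed_le ((continuous_apply j).comp continuous_snd).abs continuous_const
  have hScompact : IsCompact S := by
    refine IsCompact.of_isClosed_subset
      ((isCompact_univ_pi fun _ : I => isCompact_Icc (a := -(3*M)) (b := 3*M)).prod
        (isCompact_univ_pi fun _ : J => isCompact_Icc (a := -(2*M)) (b := 2*M)))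
      hSclosed ?_
    rintro p ⟨_, hb1, hb2⟩
    exact ⟨fun i _ => abs_le.mp (hb1 i), fun j _ => abs_le.mp (hb2 j)⟩
  have hSne : S.Nonempty := by
    obtain ⟨u₂, v₂, hf2, hb2, hb2', _⟩ := norm (fun i => univ.inf' univ_nonempty (c i))
      (fun _ => 0)
      (fun i j => by
        have := Finset.inf'_le (c i) (mem_univ j)
        linarith)
    exact ⟨(u₂, v₂), hf2, hb2, hb2'⟩
  have hgcont : Continuous (fun p : (I → ℝ) × (J → ℝ) =>
      ∑ i, p.1 i * μ i + ∑ j, p.2 j * ν j) := by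
    refine Continuous.add ?_ ?_
    · exact continuous_finset_sum _ fun i _ =>
        ((continuous_apply i).comp continuous_fst).mul continuous_const
    · exact continuous_finset_sum _ fun j _ =>
        ((continuous_apply j).comp continuous_snd).mul continuous_const
  obtain ⟨q, hqS, hqmax⟩ := hScompact.exists_isMaxOn hSne hgcont.continuousOn
  have hqle : ∑ i, q.1 i * μ i + ∑ j, q.2 j * ν j ≤ MK := weak q.1 q.2 hqS.1
  have hqge : MK ≤ ∑ i, q.1 i * μ i + ∑ j, q.2 j * ν j := by
    by_contra h
    push_neg at h
    obtain ⟨u, v, huv, hval⟩ := sep_lemma μ hμ0 hμ1 ν hν0 hν1 c MK hMK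
      (MK - (∑ i, q.1 i * μ i + ∑ j, q.2 j * ν j)) (by linarith)
    obtain ⟨u₂, v₂, hf2, hb2, hb2', hle2⟩ := norm u v huv
    have hmem : (u₂, v₂) ∈ S := ⟨hf2, hb2, hb2'⟩
    have := hqmax hmem
    simp only [Set.mem_setOf_eq] at this
    linarith
  have hqMK : ∑ i, q.1 i * μ i + ∑ j, q.2 j * ν j = MK := le_antisymm hqle hqge
  -- the final dual solution
  set v : J → ℝ := q.2 with hv
  set uf : I → ℝ := fun i => Finset.univ.inf' Finset.univ_nonempty (fun j' => c i j' - v j')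
    with huf
  have huf_f : ∀ i j, uf i + v j ≤ c i j := by
    intro i j
    have := Finset.inf'_le (fun j' => c i j' - v j') (mem_univ j)
    simp only [huf]; linarith
  have huge : ∀ i, q.1 i ≤ uf i := fun i =>
    Finset.le_inf' _ _ fun j _ => by linarith [hqS.1 i j]
  have hvalf : ∑ i, uf i * μ i + ∑ j, v j * ν j = MK := by
    refine le_antisymm (weak uf v huf_f) ?_
    rw [← hqMK]
    have : ∑ i, q.1 i * μ i ≤ ∑ i, uf i * μ i :=
      Finset.sum_le_sum fun i _ => mul_le_mul_of_nonneg_right (huge i) (hμ0 i)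
    linarith
  constructor
  · apply le_antisymm
    · refine le_csSup ⟨MK, ?_⟩ ⟨uf, v, huf_f, hvalf.symm⟩
      rintro x ⟨u', v', h', rfl⟩
      exact weak u' v' h'
    · refine csSup_le ⟨_, ⟨uf, v, huf_f, rfl⟩⟩ ?_
      rintro x ⟨u', v', h', rfl⟩
      exact weak u' v' h'
  · exact ⟨v, huf_f, hvalf⟩
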